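/- With the standing setup for the time-weighted LP trajectory metric, let X, Z, Y be indexed families of trajectories of sizes nX, nZ, nY. For each k = 1,…,T, let A^k be an (nX+1)×(nZ+1) matrix and B^k an (nZ+1)×(nY+1) matrix satisfying the relaxed assignment constraints, and let W^k be their composition: W^k(i,j) = Σ_{l=1}^{nZ} A^k(i,l)B^k(l,j) for i ≤ nX, j ≤ nY, with last row/column completed so that W^k satisfies the relaxed assignment constraints and W^k(nX+1, nY+1) = 0. Then the objective satisfies the triangle inequality c(X, Y, W^{1:T}) ≤ c(X, Z, A^{1:T}) + c(Z, Y, B^{1:T}). -/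

import Mathlib

open Finset

noncomputable section

/-- The GOSPA base distance on `Option E`. -/
def dG {E : Type*} [MetricSpace E] (c p : ℝ) : Option E → Option E → ℝ
  | some x, some y => min c (dist x y)
  | none, none => 0
  | _, _ => c / 2 ^ (1 / p)

/-- Relaxed assignment constraints for a soft-assignment matrix. -/
def Relaxed {m n : ℕ} (W : Matrix (Fin (m + 1)) (Fin (n + 1)) ℝ) : Prop :=
  (∀ i j, 0 ≤ W i j) ∧
  (∀ j : Fin n, ∑ i, W i j.castSucc = 1) ∧
  (∀ i : Fin m, ∑ j, W i.castSucc j = 1) ∧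
  W (Fin.last m) (Fin.last n) = 0

/-- A matrix is binary if every entry is `0` or `1`. -/
def IsBinary {m n : ℕ} (W : Matrix (Fin (m + 1)) (Fin (n + 1)) ℝ) : Prop :=
  ∀ i j, W i j = 0 ∨ W i j = 1

/-- Extend an indexed family of trajectories with an extra all-`none` trajectory. -/
def extTraj {E : Type*} {T n : ℕ} (X : Fin n → Fin T → Option E) :
    Fin (n + 1) → Fin T → Option E :=
  fun i => if h : (i : ℕ) < n then X ⟨i, h⟩ else fun _ => none

/-- The matrix `D^k_{X,Y}(i,j) = dG(X_i(k), Y_j(k))^p` of localisation costs at time `k`. -/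
def Dmat {E : Type*} [MetricSpace E] (c p : ℝ) {T nX nY : ℕ}
    (X : Fin nX → Fin T → Option E) (Y : Fin nY → Fin T → Option E) (k : Fin T) :
    Matrix (Fin (nX + 1)) (Fin (nY + 1)) ℝ :=
  fun i j => dG c p (extTraj X i k) (extTraj Y j k) ^ p

/-- The objective of the time-weighted LP trajectory metric for a sequence of
soft-assignment matrices `W`. -/
def obj {E : Type*} [MetricSpace E] (c p γ : ℝ) (w1 w2 : ℕ → ℝ) {T nX nY : ℕ}
    (X : Fin nX → Fin T → Option E) (Y : Fin nY → Fin T → Option E)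
    (W : Fin T → Matrix (Fin (nX + 1)) (Fin (nY + 1)) ℝ) : ℝ :=
  (∑ k : Fin T, w1 k.1 * ∑ i, ∑ j, Dmat c p X Y k i j * W k i j +
      γ ^ p / 2 * ∑ k : Fin (T - 1), w2 k.1 *
        ∑ i : Fin nX, ∑ j : Fin nY,
          |W ⟨k.1, by have := k.2; omega⟩ i.castSucc j.castSucc -
            W ⟨k.1 + 1, by have := k.2; omega⟩ i.castSucc j.castSucc|) ^ (1 / p)

/-- The time-weighted LP trajectory metric: infimum of the objective over all sequences of
matrices satisfying the relaxed assignment constraints. -/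
def dbar {E : Type*} [MetricSpace E] (c p γ : ℝ) (w1 w2 : ℕ → ℝ) {T nX nY : ℕ}
    (X : Fin nX → Fin T → Option E) (Y : Fin nY → Fin T → Option E) : ℝ :=
  ⨅ W : {W : Fin T → Matrix (Fin (nX + 1)) (Fin (nY + 1)) ℝ // ∀ k, Relaxed (W k)},
    obj c p γ w1 w2 X Y W.1

/-- The time-weighted multi-dimensional assignment metric: infimum of the objective over all
sequences of binary matrices satisfying the relaxed assignment constraints. -/
def dmd {E : Type*} [MetricSpace E] (c p γ : ℝ) (w1 w2 : ℕ → ℝ) {T nX nY : ℕ}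
    (X : Fin nX → Fin T → Option E) (Y : Fin nY → Fin T → Option E) : ℝ :=
  ⨅ W : {W : Fin T → Matrix (Fin (nX + 1)) (Fin (nY + 1)) ℝ //
      ∀ k, Relaxed (W k) ∧ IsBinary (W k)},
    obj c p γ w1 w2 X Y W.1

/-- Composition of soft-assignment matrices, with last row/column completed. -/
def compW {nX nZ nY : ℕ} (A : Matrix (Fin (nX + 1)) (Fin (nZ + 1)) ℝ)
    (B : Matrix (Fin (nZ + 1)) (Fin (nY + 1)) ℝ) :
    Matrix (Fin (nX + 1)) (Fin (nY + 1)) ℝ :=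
  fun i j =>
    if _hi : (i : ℕ) < nX then
      if _hj : (j : ℕ) < nY then ∑ l : Fin nZ, A i l.castSucc * B l.castSucc j
      else 1 - ∑ j' : Fin nY, ∑ l : Fin nZ, A i l.castSucc * B l.castSucc j'.castSucc
    else
      if _hj : (j : ℕ) < nY then
        1 - ∑ i' : Fin nX, ∑ l : Fin nZ, A i'.castSucc l.castSucc * B l.castSucc j
      else 0

/-! ### Auxiliary lemmas -/

section AuxdG
variable {E : Type*} [MetricSpace E] {c p : ℝ}

lemma dG_nonneg (hc : 0 < c) (x y : Option E) : 0 ≤ dG c p x y := by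
  have h2 : (0:ℝ) < 2 ^ (1/p) := Real.rpow_pos_of_pos two_pos _
  rcases x with _ | x <;> rcases y with _ | y <;> simp only [dG] <;>
    first
      | positivity
      | exact le_min hc.le dist_nonneg

lemma min_triangle (hc : 0 < c) (x z y : E) :
    min c (dist x y) ≤ min c (dist x z) + min c (dist z y) := by
  rcases le_total c (dist x z) with h1 | h1
  · calc min c (dist x y) ≤ c := min_le_left _ _
      _ ≤ min c (dist x z) + min c (dist z y) := by
          rw [min_eq_left h1]
          exact le_add_of_nonneg_right (le_min hc.le dist_nonneg)
  rcases le_total c (dist z y) with h2 | h2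
  · calc min c (dist x y) ≤ c := min_le_left _ _
      _ ≤ min c (dist x z) + min c (dist z y) := by
          rw [min_eq_left h2]
          exact le_add_of_nonneg_left (le_min hc.le dist_nonneg)
  · calc min c (dist x y) ≤ dist x y := min_le_right _ _
      _ ≤ dist x z + dist z y := dist_triangle _ _ _
      _ = min c (dist x z) + min c (dist z y) := by rw [min_eq_right h1, min_eq_right h2]

lemma dG_triangle (hc : 0 < c) (hp : 1 ≤ p) (x z y : Option E) :
    dG c p x y ≤ dG c p x z + dG c p z y := by
  have h2 : (0:ℝ) < 2 ^ (1/p) := Real.rpow_pos_of_pos two_pos _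
  have hhalf : (0:ℝ) ≤ c / 2 ^ (1/p) := by positivity
  have hmin : ∀ a b : E, 0 ≤ min c (dist a b) := fun a b => le_min hc.le dist_nonneg
  have hc2 : c ≤ c / 2 ^ (1/p) + c / 2 ^ (1/p) := by
    rw [← add_div, le_div_iff₀ h2]
    calc c * 2 ^ (1/p) ≤ c * 2 ^ (1:ℝ) := by
          refine mul_le_mul_of_nonneg_left ?_ hc.le
          refine Real.rpow_le_rpow_of_exponent_le one_le_two ?_
          rw [div_le_one (lt_of_lt_of_le one_pos hp)]; exact hp
      _ = c + c := by rw [Real.rpow_one]; ring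
  rcases x with _ | x <;> rcases z with _ | z <;> rcases y with _ | y <;>
      simp only [dG]
  · norm_num
  · norm_num
  · positivity
  · exact le_add_of_nonneg_right (hmin _ _)
  · norm_num
  · exact le_trans (min_le_left _ _) hc2
  · exact le_add_of_nonneg_left (hmin _ _)
  · exact min_triangle hc _ _ _

end AuxdG

section Mink

lemma weighted_Lp_add_le {ι : Type*} [Fintype ι] {p : ℝ} (hp : 1 ≤ p)
    (μ f g : ι → ℝ) (hμ : ∀ i, 0 ≤ μ i) (hf : ∀ i, 0 ≤ f i) (hg : ∀ i, 0 ≤ g i) :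
    (∑ i, μ i * (f i + g i) ^ p) ^ (1/p) ≤
      (∑ i, μ i * f i ^ p) ^ (1/p) + (∑ i, μ i * g i ^ p) ^ (1/p) := by
  have hp0 : p ≠ 0 := (lt_of_lt_of_le one_pos hp).ne'
  have key : ∀ h : ι → ℝ, (∀ i, 0 ≤ h i) → ∀ i, μ i * h i ^ p = |μ i ^ (1/p) * h i| ^ p := by
    intro h hh i
    rw [abs_of_nonneg (mul_nonneg (Real.rpow_nonneg (hμ i) _) (hh i)),
      Real.mul_rpow (Real.rpow_nonneg (hμ i) _) (hh i), ← Real.rpow_mul (hμ i),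
      one_div_mul_cancel hp0, Real.rpow_one]
  have h1 : ∀ i, μ i * (f i + g i) ^ p =
      |(fun i => μ i ^ (1/p) * f i) i + (fun i => μ i ^ (1/p) * g i) i| ^ p := by
    intro i
    simp only [← mul_add]
    exact key _ (fun i => add_nonneg (hf i) (hg i)) i
  simp only [h1, key f hf, key g hg]
  exact Real.Lp_add_le univ _ _ hp

lemma weighted_Lp_add_le₃ {ι₁ ι₂ ι₃ : Type*} [Fintype ι₁] [Fintype ι₂] [Fintype ι₃]
    {p : ℝ} (hp : 1 ≤ p)
    (μ₁ f₁ g₁ : ι₁ → ℝ) (μ₂ f₂ g₂ : ι₂ → ℝ) (μ₃ f₃ g₃ : ι₃ → ℝ)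
    (hμ₁ : ∀ i, 0 ≤ μ₁ i) (hf₁ : ∀ i, 0 ≤ f₁ i) (hg₁ : ∀ i, 0 ≤ g₁ i)
    (hμ₂ : ∀ i, 0 ≤ μ₂ i) (hf₂ : ∀ i, 0 ≤ f₂ i) (hg₂ : ∀ i, 0 ≤ g₂ i)
    (hμ₃ : ∀ i, 0 ≤ μ₃ i) (hf₃ : ∀ i, 0 ≤ f₃ i) (hg₃ : ∀ i, 0 ≤ g₃ i) :
    (∑ i, μ₁ i * (f₁ i + g₁ i) ^ p + (∑ i, μ₂ i * (f₂ i + g₂ i) ^ p +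
        ∑ i, μ₃ i * (f₃ i + g₃ i) ^ p)) ^ (1/p) ≤
      (∑ i, μ₁ i * f₁ i ^ p + (∑ i, μ₂ i * f₂ i ^ p + ∑ i, μ₃ i * f₃ i ^ p)) ^ (1/p) +
      (∑ i, μ₁ i * g₁ i ^ p + (∑ i, μ₂ i * g₂ i ^ p + ∑ i, μ₃ i * g₃ i ^ p)) ^ (1/p) := by
  have := weighted_Lp_add_le (ι := ι₁ ⊕ (ι₂ ⊕ ι₃)) hp
    (Sum.elim μ₁ (Sum.elim μ₂ μ₃)) (Sum.elim f₁ (Sum.elim f₂ f₃)) (Sum.elim g₁ (Sum.elim g₂ g₃))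
    (by rintro (i | i | i) <;> simp [hμ₁, hμ₂, hμ₃])
    (by rintro (i | i | i) <;> simp [hf₁, hf₂, hf₃])
    (by rintro (i | i | i) <;> simp [hg₁, hg₂, hg₃])
  simpa [Fintype.sum_sum_type] using this

end Mink

lemma abs_mul_sub_mul (a₁ a₂ b₁ b₂ : ℝ) (hb : 0 ≤ b₁) (ha : 0 ≤ a₂) :
    |a₁ * b₁ - a₂ * b₂| ≤ |a₁ - a₂| * b₁ + a₂ * |b₁ - b₂| := by
  have h : a₁ * b₁ - a₂ * b₂ = (a₁ - a₂) * b₁ + a₂ * (b₁ - b₂) := by ring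
  rw [h]
  refine le_trans (abs_add_le _ _) ?_
  rw [abs_mul, abs_mul, abs_of_nonneg hb, abs_of_nonneg ha]

/-- The "extended composition" weights. -/
def Mw {nX nZ nY : ℕ} (A : Matrix (Fin (nX + 1)) (Fin (nZ + 1)) ℝ)
    (B : Matrix (Fin (nZ + 1)) (Fin (nY + 1)) ℝ)
    (i : Fin (nX + 1)) (l : Fin (nZ + 1)) (j : Fin (nY + 1)) : ℝ :=
  if (l : ℕ) < nZ then A i l * B l j
  else if (j : ℕ) < nY then (if (i : ℕ) < nX then 0 else B l j)
  else A i l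

section MwSec
variable {nX nZ nY : ℕ} {A : Matrix (Fin (nX + 1)) (Fin (nZ + 1)) ℝ}
  {B : Matrix (Fin (nZ + 1)) (Fin (nY + 1)) ℝ}

lemma Relaxed.rowSum {m n : ℕ} {W : Matrix (Fin (m + 1)) (Fin (n + 1)) ℝ} (hW : Relaxed W)
    {i : Fin (m + 1)} (hi : (i : ℕ) < m) : ∑ j, W i j = 1 := by
  have h : (Fin.castSucc (⟨i, hi⟩ : Fin m)) = i := by ext; simp
  have := hW.2.2.1 ⟨i, hi⟩
  rwa [h] at this

lemma Relaxed.colSum {m n : ℕ} {W : Matrix (Fin (m + 1)) (Fin (n + 1)) ℝ} (hW : Relaxed W)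
    {j : Fin (n + 1)} (hj : (j : ℕ) < n) : ∑ i, W i j = 1 := by
  have h : (Fin.castSucc (⟨j, hj⟩ : Fin n)) = j := by ext; simp
  have := hW.2.1 ⟨j, hj⟩
  rwa [h] at this

lemma Mw_nonneg (hA : Relaxed A) (hB : Relaxed B) (i l j) : 0 ≤ Mw A B i l j := by
  unfold Mw
  split_ifs
  · exact mul_nonneg (hA.1 _ _) (hB.1 _ _)
  · exact le_refl 0
  · exact hB.1 _ _
  · exact hA.1 _ _

lemma sum_Mw_j (hB : Relaxed B) {i : Fin (nX + 1)} {l : Fin (nZ + 1)}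
    (hil : (i : ℕ) < nX ∨ (l : ℕ) < nZ) : ∑ j, Mw A B i l j = A i l := by
  by_cases hl : (l : ℕ) < nZ
  · simp only [Mw, if_pos hl]
    rw [← Finset.mul_sum, hB.rowSum hl, mul_one]
  · have hi : (i : ℕ) < nX := hil.resolve_right hl
    simp only [Mw, if_neg hl]
    rw [Fin.sum_univ_castSucc]
    have h1 : ∀ j : Fin nY,
        (if ((j.castSucc : Fin (nY + 1)) : ℕ) < nY then (if (i : ℕ) < nX then 0 else B l j.castSucc)
          else A i l) = 0 := by
      intro j
      rw [if_pos (by simpa using j.isLt), if_pos hi]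
    rw [Finset.sum_congr rfl fun j _ => h1 j]
    simp

lemma sum_Mw_i (hA : Relaxed A) {l : Fin (nZ + 1)} {j : Fin (nY + 1)}
    (hlj : (l : ℕ) < nZ ∨ (j : ℕ) < nY) : ∑ i, Mw A B i l j = B l j := by
  by_cases hl : (l : ℕ) < nZ
  · simp only [Mw, if_pos hl]
    rw [← Finset.sum_mul, hA.colSum hl, one_mul]
  · have hj : (j : ℕ) < nY := hlj.resolve_left hl
    simp only [Mw, if_neg hl, if_pos hj]
    rw [Fin.sum_univ_castSucc]
    have h1 : ∀ i : Fin nX,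
        (if ((i.castSucc : Fin (nX + 1)) : ℕ) < nX then (0:ℝ) else B l j) = 0 := by
      intro i; rw [if_pos (by simpa using i.isLt)]
    rw [Finset.sum_congr rfl fun i _ => h1 i]
    simp

lemma sum_Mw_l (hA : Relaxed A) (hB : Relaxed B) (i : Fin (nX + 1)) (j : Fin (nY + 1))
    (hij : (i : ℕ) < nX ∨ (j : ℕ) < nY) : ∑ l, Mw A B i l j = compW A B i j := by
  have hcs : ∀ l : Fin nZ, Mw A B i l.castSucc j = A i l.castSucc * B l.castSucc j := by
    intro l; simp only [Mw]; rw [if_pos (by simpa using l.isLt)]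
  have hlast : ¬ ((Fin.last nZ : Fin (nZ + 1)) : ℕ) < nZ := by simp
  rw [Fin.sum_univ_castSucc, Finset.sum_congr rfl fun l _ => hcs l]
  by_cases hi : (i : ℕ) < nX <;> by_cases hj : (j : ℕ) < nY
  · simp only [Mw, if_neg hlast, if_pos hj, if_pos hi, compW, dif_pos hi, dif_pos hj, add_zero]
  · have hj' : j = Fin.last nY := by ext; have := j.isLt; simp; omega
    subst hj'
    simp only [Mw, if_neg hlast, if_neg hj, compW, dif_pos hi, dif_neg hj]
    have hrowB : ∀ l : Fin nZ, ∑ j' : Fin nY, B l.castSucc j'.castSucc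
        = 1 - B l.castSucc (Fin.last nY) := by
      intro l
      have := hB.2.2.1 l
      rw [Fin.sum_univ_castSucc] at this
      linarith
    have hrowA : ∑ l : Fin nZ, A i l.castSucc = 1 - A i (Fin.last nZ) := by
      have := hA.rowSum hi
      rw [Fin.sum_univ_castSucc] at this
      linarith
    have e1 : ∑ j' : Fin nY, ∑ l : Fin nZ, A i l.castSucc * B l.castSucc j'.castSucc
        = (1 - A i (Fin.last nZ)) - ∑ l : Fin nZ, A i l.castSucc * B l.castSucc (Fin.last nY) := by
      rw [Finset.sum_comm]
      have h2 : ∀ l : Fin nZ, ∑ j' : Fin nY, A i l.castSucc * B l.castSucc j'.castSucc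
          = A i l.castSucc - A i l.castSucc * B l.castSucc (Fin.last nY) := by
        intro l; rw [← Finset.mul_sum, hrowB l]; ring
      rw [Finset.sum_congr rfl fun l _ => h2 l, Finset.sum_sub_distrib, hrowA]
    rw [e1]
    ring
  · have hi' : i = Fin.last nX := by ext; have := i.isLt; simp; omega
    subst hi'
    simp only [Mw, if_neg hlast, if_pos hj, if_neg hi, compW, dif_neg hi, dif_pos hj]
    have hcolA : ∀ l : Fin nZ, ∑ i' : Fin nX, A i'.castSucc l.castSucc
        = 1 - A (Fin.last nX) l.castSucc := by
      intro l
      have := hA.colSum (j := l.castSucc) (by simpa using l.isLt)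
      rw [Fin.sum_univ_castSucc] at this
      linarith
    have hcolB : ∑ l : Fin nZ, B l.castSucc j = 1 - B (Fin.last nZ) j := by
      have := hB.colSum hj
      rw [Fin.sum_univ_castSucc] at this
      linarith
    have e1 : ∑ i' : Fin nX, ∑ l : Fin nZ, A i'.castSucc l.castSucc * B l.castSucc j
        = (1 - B (Fin.last nZ) j)
          - ∑ l : Fin nZ, A (Fin.last nX) l.castSucc * B l.castSucc j := by
      rw [Finset.sum_comm]
      have h2 : ∀ l : Fin nZ, ∑ i' : Fin nX, A i'.castSucc l.castSucc * B l.castSucc j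
          = B l.castSucc j - A (Fin.last nX) l.castSucc * B l.castSucc j := by
        intro l; rw [← Finset.sum_mul, hcolA l]; ring
      rw [Finset.sum_congr rfl fun l _ => h2 l, Finset.sum_sub_distrib, hcolB]
    rw [e1]
    ring
  · exact absurd hij (by simp [hi, hj])

lemma compW_nonneg (hA : Relaxed A) (hB : Relaxed B) (i j) : 0 ≤ compW A B i j := by
  by_cases hij : (i : ℕ) < nX ∨ (j : ℕ) < nY
  · rw [← sum_Mw_l hA hB i j hij]
    exact Finset.sum_nonneg fun l _ => Mw_nonneg hA hB i l j
  · push_neg at hij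
    simp only [compW, dif_neg (by omega : ¬ (i : ℕ) < nX)]
    rw [dif_neg (by omega : ¬ (j : ℕ) < nY)]

end MwSec

/-- Triangle inequality for the objective of the time-weighted LP trajectory metric:
if `W^k` is the composition of `A^k` and `B^k`, then
`c(X, Y, W^{1:T}) ≤ c(X, Z, A^{1:T}) + c(Z, Y, B^{1:T})`. -/
theorem obj_triangle {E : Type*} [MetricSpace E] {T nX nZ nY : ℕ}
    (c p γ : ℝ) (hc : 0 < c) (hp : 1 ≤ p) (hγ : 0 < γ)
    (w1 w2 : ℕ → ℝ) (hw1 : ∀ k < T, 0 < w1 k) (hw2 : ∀ k < T - 1, 0 < w2 k)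
    (X : Fin nX → Fin T → Option E) (Z : Fin nZ → Fin T → Option E)
    (Y : Fin nY → Fin T → Option E)
    (A : Fin T → Matrix (Fin (nX + 1)) (Fin (nZ + 1)) ℝ)
    (B : Fin T → Matrix (Fin (nZ + 1)) (Fin (nY + 1)) ℝ)
    (hA : ∀ k, Relaxed (A k)) (hB : ∀ k, Relaxed (B k)) :
    obj c p γ w1 w2 X Y (fun k => compW (A k) (B k)) ≤
      obj c p γ w1 w2 X Z A + obj c p γ w1 w2 Z Y B := by
  have hp0 : (0:ℝ) < p := lt_of_lt_of_le one_pos hp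
  have hpne : p ≠ 0 := hp0.ne'
  have hpinv : (0:ℝ) ≤ 1/p := by positivity
  have hdG0 : ∀ (x y : Option E), 0 ≤ dG c p x y := dG_nonneg hc
  have hγp : (0:ℝ) ≤ γ ^ p := Real.rpow_nonneg hγ.le p
  have hγp2 : (0:ℝ) ≤ γ ^ p / 2 := div_nonneg hγp (by norm_num)
  have hw1' : ∀ k : Fin T, 0 ≤ w1 k.1 := fun k => (hw1 _ k.2).le
  have hw2' : ∀ k : Fin (T - 1), 0 ≤ w2 k.1 := fun k => (hw2 _ k.2).le
  have habsle : ∀ x : ℝ, 0 ≤ γ * |x| ^ (1/p) :=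
    fun x => mul_nonneg hγ.le (Real.rpow_nonneg (abs_nonneg _) _)
  have hpowabs : ∀ x : ℝ, (γ * |x| ^ (1/p)) ^ p = γ ^ p * |x| := by
    intro x
    rw [Real.mul_rpow hγ.le (Real.rpow_nonneg (abs_nonneg _) _), ← Real.rpow_mul (abs_nonneg _),
      one_div_mul_cancel hpne, Real.rpow_one]
  -- Minkowski inequality over the three blocks of indices
  have H := weighted_Lp_add_le₃ (p := p) hp
    (fun q : Fin T × Fin (nX+1) × Fin (nZ+1) × Fin (nY+1) =>
      w1 q.1.1 * Mw (A q.1) (B q.1) q.2.1 q.2.2.1 q.2.2.2)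
    (fun q => dG c p (extTraj X q.2.1 q.1) (extTraj Z q.2.2.1 q.1))
    (fun q => dG c p (extTraj Z q.2.2.1 q.1) (extTraj Y q.2.2.2 q.1))
    (fun q : Fin (T-1) × Fin nX × Fin nZ × Fin (nY+1) =>
      w2 q.1.1 / 2 * B ⟨q.1.1, by have := q.1.2; omega⟩ q.2.2.1.castSucc q.2.2.2)
    (fun q => γ * |A ⟨q.1.1, by have := q.1.2; omega⟩ q.2.1.castSucc q.2.2.1.castSucc -
      A ⟨q.1.1 + 1, by have := q.1.2; omega⟩ q.2.1.castSucc q.2.2.1.castSucc| ^ (1/p))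
    (fun _ => 0)
    (fun q : Fin (T-1) × Fin (nX+1) × Fin nZ × Fin nY =>
      w2 q.1.1 / 2 * A ⟨q.1.1 + 1, by have := q.1.2; omega⟩ q.2.1 q.2.2.1.castSucc)
    (fun _ => 0)
    (fun q => γ * |B ⟨q.1.1, by have := q.1.2; omega⟩ q.2.2.1.castSucc q.2.2.2.castSucc -
      B ⟨q.1.1 + 1, by have := q.1.2; omega⟩ q.2.2.1.castSucc q.2.2.2.castSucc| ^ (1/p))
    (fun q => mul_nonneg (hw1' q.1) (Mw_nonneg (hA _) (hB _) _ _ _))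
    (fun q => hdG0 _ _) (fun q => hdG0 _ _)
    (fun q => mul_nonneg (div_nonneg (hw2' q.1) (by norm_num)) ((hB _).1 _ _))
    (fun q => habsle _) (fun q => le_refl 0)
    (fun q => mul_nonneg (div_nonneg (hw2' q.1) (by norm_num)) ((hA _).1 _ _))
    (fun q => le_refl 0) (fun q => habsle _)
  simp only [Fintype.sum_prod_type, add_zero, zero_add, Real.zero_rpow hpne, mul_zero,
    zero_mul, Finset.sum_const_zero] at H
  -- abbreviations for the localisation identities
  have e1 : ∀ (k : Fin T) (i : Fin (nX+1)) (l : Fin (nZ+1)),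
      ∑ j, w1 k.1 * Mw (A k) (B k) i l j * dG c p (extTraj X i k) (extTraj Z l k) ^ p
        = w1 k.1 * (Dmat c p X Z k i l * A k i l) := by
    intro k i l
    by_cases hil : (i:ℕ) < nX ∨ (l:ℕ) < nZ
    · have harr : ∀ j : Fin (nY+1),
          w1 k.1 * Mw (A k) (B k) i l j * dG c p (extTraj X i k) (extTraj Z l k) ^ p
            = w1 k.1 * (dG c p (extTraj X i k) (extTraj Z l k) ^ p * Mw (A k) (B k) i l j) :=
        fun j => by ring
      rw [Finset.sum_congr rfl fun j _ => harr j, ← Finset.mul_sum, ← Finset.mul_sum,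
        sum_Mw_j (hB k) hil]
      simp only [Dmat]
    · rw [not_or] at hil
      have hX : extTraj X i k = none := by simp [extTraj, hil.1]
      have hZ : extTraj Z l k = none := by simp [extTraj, hil.2]
      simp [Dmat, hX, hZ, dG, Real.zero_rpow hpne]
  have e1g : ∀ (k : Fin T) (l : Fin (nZ+1)) (j : Fin (nY+1)),
      ∑ i, w1 k.1 * Mw (A k) (B k) i l j * dG c p (extTraj Z l k) (extTraj Y j k) ^ p
        = w1 k.1 * (Dmat c p Z Y k l j * B k l j) := by
    intro k l j
    by_cases hlj : (l:ℕ) < nZ ∨ (j:ℕ) < nY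
    · have harr : ∀ i : Fin (nX+1),
          w1 k.1 * Mw (A k) (B k) i l j * dG c p (extTraj Z l k) (extTraj Y j k) ^ p
            = w1 k.1 * (dG c p (extTraj Z l k) (extTraj Y j k) ^ p * Mw (A k) (B k) i l j) :=
        fun i => by ring
      rw [Finset.sum_congr rfl fun i _ => harr i, ← Finset.mul_sum, ← Finset.mul_sum,
        sum_Mw_i (hA k) hlj]
      simp only [Dmat]
    · rw [not_or] at hlj
      have hZ : extTraj Z l k = none := by simp [extTraj, hlj.1]
      have hY : extTraj Y j k = none := by simp [extTraj, hlj.2]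
      simp [Dmat, hZ, hY, dG, Real.zero_rpow hpne]
  -- the f-side sums equal the objective for (X, Z, A)
  have EFloc : ∑ k : Fin T, ∑ i : Fin (nX+1), ∑ l : Fin (nZ+1), ∑ j : Fin (nY+1),
        w1 k.1 * Mw (A k) (B k) i l j * dG c p (extTraj X i k) (extTraj Z l k) ^ p
      = ∑ k : Fin T, w1 k.1 * ∑ i, ∑ l, Dmat c p X Z k i l * A k i l := by
    refine Finset.sum_congr rfl fun k _ => ?_
    rw [Finset.mul_sum]
    refine Finset.sum_congr rfl fun i _ => ?_
    rw [Finset.mul_sum]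
    exact Finset.sum_congr rfl fun l _ => e1 k i l
  have EGloc : ∑ k : Fin T, ∑ i : Fin (nX+1), ∑ l : Fin (nZ+1), ∑ j : Fin (nY+1),
        w1 k.1 * Mw (A k) (B k) i l j * dG c p (extTraj Z l k) (extTraj Y j k) ^ p
      = ∑ k : Fin T, w1 k.1 * ∑ l, ∑ j, Dmat c p Z Y k l j * B k l j := by
    refine Finset.sum_congr rfl fun k _ => ?_
    rw [Finset.sum_comm]
    rw [Finset.mul_sum]
    refine Finset.sum_congr rfl fun l _ => ?_
    rw [Finset.sum_comm, Finset.mul_sum]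
    exact Finset.sum_congr rfl fun j _ => e1g k l j
  have EFsw : ∑ k : Fin (T-1), ∑ i : Fin nX, ∑ l : Fin nZ, ∑ j : Fin (nY+1),
        w2 k.1 / 2 * B ⟨k.1, by have := k.2; omega⟩ l.castSucc j *
          (γ * |A ⟨k.1, by have := k.2; omega⟩ i.castSucc l.castSucc -
            A ⟨k.1 + 1, by have := k.2; omega⟩ i.castSucc l.castSucc| ^ (1/p)) ^ p
      = γ ^ p / 2 * ∑ k : Fin (T-1), w2 k.1 * ∑ i : Fin nX, ∑ l : Fin nZ,
          |A ⟨k.1, by have := k.2; omega⟩ i.castSucc l.castSucc -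
            A ⟨k.1 + 1, by have := k.2; omega⟩ i.castSucc l.castSucc| := by
    calc ∑ k : Fin (T-1), ∑ i : Fin nX, ∑ l : Fin nZ, ∑ j : Fin (nY+1),
          w2 k.1 / 2 * B ⟨k.1, by have := k.2; omega⟩ l.castSucc j *
            (γ * |A ⟨k.1, by have := k.2; omega⟩ i.castSucc l.castSucc -
              A ⟨k.1 + 1, by have := k.2; omega⟩ i.castSucc l.castSucc| ^ (1/p)) ^ p
        = ∑ k : Fin (T-1), ∑ i : Fin nX, ∑ l : Fin nZ,
            w2 k.1 / 2 * (γ ^ p * |A ⟨k.1, by have := k.2; omega⟩ i.castSucc l.castSucc -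
              A ⟨k.1 + 1, by have := k.2; omega⟩ i.castSucc l.castSucc|) := by
          refine Finset.sum_congr rfl fun k _ => Finset.sum_congr rfl fun i _ =>
            Finset.sum_congr rfl fun l _ => ?_
          rw [hpowabs, ← Finset.sum_mul, ← Finset.mul_sum,
            (hB ⟨k.1, by have := k.2; omega⟩).2.2.1 l, mul_one]
      _ = γ ^ p / 2 * ∑ k : Fin (T-1), w2 k.1 * ∑ i : Fin nX, ∑ l : Fin nZ,
            |A ⟨k.1, by have := k.2; omega⟩ i.castSucc l.castSucc -
              A ⟨k.1 + 1, by have := k.2; omega⟩ i.castSucc l.castSucc| := by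
          simp only [Finset.mul_sum]
          exact Finset.sum_congr rfl fun k _ => Finset.sum_congr rfl fun i _ =>
            Finset.sum_congr rfl fun l _ => by ring
  have EGsw : ∑ k : Fin (T-1), ∑ i : Fin (nX+1), ∑ l : Fin nZ, ∑ j : Fin nY,
        w2 k.1 / 2 * A ⟨k.1 + 1, by have := k.2; omega⟩ i l.castSucc *
          (γ * |B ⟨k.1, by have := k.2; omega⟩ l.castSucc j.castSucc -
            B ⟨k.1 + 1, by have := k.2; omega⟩ l.castSucc j.castSucc| ^ (1/p)) ^ p
      = γ ^ p / 2 * ∑ k : Fin (T-1), w2 k.1 * ∑ l : Fin nZ, ∑ j : Fin nY,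
          |B ⟨k.1, by have := k.2; omega⟩ l.castSucc j.castSucc -
            B ⟨k.1 + 1, by have := k.2; omega⟩ l.castSucc j.castSucc| := by
    calc ∑ k : Fin (T-1), ∑ i : Fin (nX+1), ∑ l : Fin nZ, ∑ j : Fin nY,
          w2 k.1 / 2 * A ⟨k.1 + 1, by have := k.2; omega⟩ i l.castSucc *
            (γ * |B ⟨k.1, by have := k.2; omega⟩ l.castSucc j.castSucc -
              B ⟨k.1 + 1, by have := k.2; omega⟩ l.castSucc j.castSucc| ^ (1/p)) ^ p
        = ∑ k : Fin (T-1), ∑ l : Fin nZ, ∑ j : Fin nY,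
            w2 k.1 / 2 * (γ ^ p * |B ⟨k.1, by have := k.2; omega⟩ l.castSucc j.castSucc -
              B ⟨k.1 + 1, by have := k.2; omega⟩ l.castSucc j.castSucc|) := by
          refine Finset.sum_congr rfl fun k _ => ?_
          rw [Finset.sum_comm]
          refine Finset.sum_congr rfl fun l _ => ?_
          rw [Finset.sum_comm]
          refine Finset.sum_congr rfl fun j _ => ?_
          rw [hpowabs, ← Finset.sum_mul, ← Finset.mul_sum,
            (hA ⟨k.1 + 1, by have := k.2; omega⟩).2.1 l, mul_one]
      _ = γ ^ p / 2 * ∑ k : Fin (T-1), w2 k.1 * ∑ l : Fin nZ, ∑ j : Fin nY,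
            |B ⟨k.1, by have := k.2; omega⟩ l.castSucc j.castSucc -
              B ⟨k.1 + 1, by have := k.2; omega⟩ l.castSucc j.castSucc| := by
          simp only [Finset.mul_sum]
          exact Finset.sum_congr rfl fun k _ => Finset.sum_congr rfl fun l _ =>
            Finset.sum_congr rfl fun j _ => by ring
  -- localisation part of the bound
  have ELloc : ∑ k : Fin T, w1 k.1 * ∑ i, ∑ j, Dmat c p X Y k i j * compW (A k) (B k) i j
      ≤ ∑ k : Fin T, ∑ i : Fin (nX+1), ∑ l : Fin (nZ+1), ∑ j : Fin (nY+1),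
          w1 k.1 * Mw (A k) (B k) i l j *
            (dG c p (extTraj X i k) (extTraj Z l k) + dG c p (extTraj Z l k) (extTraj Y j k)) ^ p := by
    refine Finset.sum_le_sum fun k _ => ?_
    rw [Finset.mul_sum]
    refine Finset.sum_le_sum fun i _ => ?_
    rw [Finset.mul_sum]
    rw [Finset.sum_comm]
    refine Finset.sum_le_sum fun j _ => ?_
    by_cases hij : (i:ℕ) < nX ∨ (j:ℕ) < nY
    · rw [← sum_Mw_l (hA k) (hB k) i j hij, Finset.mul_sum, Finset.mul_sum]
      refine Finset.sum_le_sum fun l _ => ?_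
      have hD : Dmat c p X Y k i j ≤
          (dG c p (extTraj X i k) (extTraj Z l k) + dG c p (extTraj Z l k) (extTraj Y j k)) ^ p := by
        have hDe : Dmat c p X Y k i j = dG c p (extTraj X i k) (extTraj Y j k) ^ p := rfl
        rw [hDe]
        exact Real.rpow_le_rpow (hdG0 _ _) (dG_triangle hc hp _ _ _) hp0.le
      calc w1 k.1 * (Dmat c p X Y k i j * Mw (A k) (B k) i l j)
          ≤ w1 k.1 * ((dG c p (extTraj X i k) (extTraj Z l k)
              + dG c p (extTraj Z l k) (extTraj Y j k)) ^ p * Mw (A k) (B k) i l j) := by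
            exact mul_le_mul_of_nonneg_left
              (mul_le_mul_of_nonneg_right hD (Mw_nonneg (hA k) (hB k) _ _ _)) (hw1' k)
        _ = w1 k.1 * Mw (A k) (B k) i l j *
              (dG c p (extTraj X i k) (extTraj Z l k)
                + dG c p (extTraj Z l k) (extTraj Y j k)) ^ p := by ring
    · rw [not_or] at hij
      have hD0 : Dmat c p X Y k i j = 0 := by
        have hX : extTraj X i k = none := by simp [extTraj, hij.1]
        have hY : extTraj Y j k = none := by simp [extTraj, hij.2]
        simp [Dmat, hX, hY, dG, Real.zero_rpow hpne]
      rw [hD0]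
      simp only [zero_mul, mul_zero]
      exact Finset.sum_nonneg fun l _ =>
        mul_nonneg (mul_nonneg (hw1' k) (Mw_nonneg (hA k) (hB k) _ _ _))
          (Real.rpow_nonneg (add_nonneg (hdG0 _ _) (hdG0 _ _)) _)
  -- switching part of the bound
  have hΔ : ∀ (k : Fin (T - 1)) (i : Fin nX) (j : Fin nY),
      |compW (A ⟨k.1, by have := k.2; omega⟩) (B ⟨k.1, by have := k.2; omega⟩)
          i.castSucc j.castSucc -
        compW (A ⟨k.1 + 1, by have := k.2; omega⟩) (B ⟨k.1 + 1, by have := k.2; omega⟩)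
          i.castSucc j.castSucc|
      ≤ ∑ l : Fin nZ, |A ⟨k.1, by have := k.2; omega⟩ i.castSucc l.castSucc -
            A ⟨k.1 + 1, by have := k.2; omega⟩ i.castSucc l.castSucc| *
            B ⟨k.1, by have := k.2; omega⟩ l.castSucc j.castSucc
        + ∑ l : Fin nZ, A ⟨k.1 + 1, by have := k.2; omega⟩ i.castSucc l.castSucc *
            |B ⟨k.1, by have := k.2; omega⟩ l.castSucc j.castSucc -
              B ⟨k.1 + 1, by have := k.2; omega⟩ l.castSucc j.castSucc| := by
    intro k i j
    have hWc : ∀ kk : Fin T, compW (A kk) (B kk) i.castSucc j.castSucc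
        = ∑ l : Fin nZ, A kk i.castSucc l.castSucc * B kk l.castSucc j.castSucc := by
      intro kk
      simp only [compW]
      rw [dif_pos (show ((i.castSucc : Fin (nX+1)) : ℕ) < nX by simpa using i.isLt),
        dif_pos (show ((j.castSucc : Fin (nY+1)) : ℕ) < nY by simpa using j.isLt)]
    rw [hWc, hWc, ← Finset.sum_sub_distrib, ← Finset.sum_add_distrib]
    refine le_trans (Finset.abs_sum_le_sum_abs _ _) (Finset.sum_le_sum fun l _ => ?_)
    exact abs_mul_sub_mul _ _ _ _ ((hB _).1 _ _) ((hA _).1 _ _)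
  have hL2 : γ ^ p / 2 * ∑ k : Fin (T-1), w2 k.1 * ∑ i : Fin nX, ∑ j : Fin nY, ∑ l : Fin nZ,
        |A ⟨k.1, by have := k.2; omega⟩ i.castSucc l.castSucc -
          A ⟨k.1 + 1, by have := k.2; omega⟩ i.castSucc l.castSucc| *
          B ⟨k.1, by have := k.2; omega⟩ l.castSucc j.castSucc
      ≤ ∑ k : Fin (T-1), ∑ i : Fin nX, ∑ l : Fin nZ, ∑ j : Fin (nY+1),
          w2 k.1 / 2 * B ⟨k.1, by have := k.2; omega⟩ l.castSucc j *
            (γ * |A ⟨k.1, by have := k.2; omega⟩ i.castSucc l.castSucc -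
              A ⟨k.1 + 1, by have := k.2; omega⟩ i.castSucc l.castSucc| ^ (1/p)) ^ p := by
    calc γ ^ p / 2 * ∑ k : Fin (T-1), w2 k.1 * ∑ i : Fin nX, ∑ j : Fin nY, ∑ l : Fin nZ,
          |A ⟨k.1, by have := k.2; omega⟩ i.castSucc l.castSucc -
            A ⟨k.1 + 1, by have := k.2; omega⟩ i.castSucc l.castSucc| *
            B ⟨k.1, by have := k.2; omega⟩ l.castSucc j.castSucc
        = ∑ k : Fin (T-1), ∑ i : Fin nX, ∑ j : Fin nY, ∑ l : Fin nZ,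
            w2 k.1 / 2 * B ⟨k.1, by have := k.2; omega⟩ l.castSucc j.castSucc *
              (γ ^ p * |A ⟨k.1, by have := k.2; omega⟩ i.castSucc l.castSucc -
                A ⟨k.1 + 1, by have := k.2; omega⟩ i.castSucc l.castSucc|) := by
          simp only [Finset.mul_sum]
          exact Finset.sum_congr rfl fun k _ => Finset.sum_congr rfl fun i _ =>
            Finset.sum_congr rfl fun j _ => Finset.sum_congr rfl fun l _ => by ring
      _ = ∑ k : Fin (T-1), ∑ i : Fin nX, ∑ l : Fin nZ, ∑ j : Fin nY,
            w2 k.1 / 2 * B ⟨k.1, by have := k.2; omega⟩ l.castSucc j.castSucc *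
              (γ ^ p * |A ⟨k.1, by have := k.2; omega⟩ i.castSucc l.castSucc -
                A ⟨k.1 + 1, by have := k.2; omega⟩ i.castSucc l.castSucc|) := by
          exact Finset.sum_congr rfl fun k _ => Finset.sum_congr rfl fun i _ =>
            Finset.sum_comm
      _ ≤ ∑ k : Fin (T-1), ∑ i : Fin nX, ∑ l : Fin nZ, ∑ j : Fin (nY+1),
            w2 k.1 / 2 * B ⟨k.1, by have := k.2; omega⟩ l.castSucc j *
              (γ ^ p * |A ⟨k.1, by have := k.2; omega⟩ i.castSucc l.castSucc -
                A ⟨k.1 + 1, by have := k.2; omega⟩ i.castSucc l.castSucc|) := by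
          refine Finset.sum_le_sum fun k _ => Finset.sum_le_sum fun i _ =>
            Finset.sum_le_sum fun l _ => ?_
          rw [Fin.sum_univ_castSucc]
          refine le_add_of_nonneg_right ?_
          exact mul_nonneg (mul_nonneg (div_nonneg (hw2' k) (by norm_num)) ((hB _).1 _ _))
            (mul_nonneg hγp (abs_nonneg _))
      _ = ∑ k : Fin (T-1), ∑ i : Fin nX, ∑ l : Fin nZ, ∑ j : Fin (nY+1),
            w2 k.1 / 2 * B ⟨k.1, by have := k.2; omega⟩ l.castSucc j *
              (γ * |A ⟨k.1, by have := k.2; omega⟩ i.castSucc l.castSucc -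
                A ⟨k.1 + 1, by have := k.2; omega⟩ i.castSucc l.castSucc| ^ (1/p)) ^ p := by
          simp only [hpowabs]
  have hL3 : γ ^ p / 2 * ∑ k : Fin (T-1), w2 k.1 * ∑ i : Fin nX, ∑ j : Fin nY, ∑ l : Fin nZ,
        A ⟨k.1 + 1, by have := k.2; omega⟩ i.castSucc l.castSucc *
          |B ⟨k.1, by have := k.2; omega⟩ l.castSucc j.castSucc -
            B ⟨k.1 + 1, by have := k.2; omega⟩ l.castSucc j.castSucc|
      ≤ ∑ k : Fin (T-1), ∑ i : Fin (nX+1), ∑ l : Fin nZ, ∑ j : Fin nY,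
          w2 k.1 / 2 * A ⟨k.1 + 1, by have := k.2; omega⟩ i l.castSucc *
            (γ * |B ⟨k.1, by have := k.2; omega⟩ l.castSucc j.castSucc -
              B ⟨k.1 + 1, by have := k.2; omega⟩ l.castSucc j.castSucc| ^ (1/p)) ^ p := by
    calc γ ^ p / 2 * ∑ k : Fin (T-1), w2 k.1 * ∑ i : Fin nX, ∑ j : Fin nY, ∑ l : Fin nZ,
          A ⟨k.1 + 1, by have := k.2; omega⟩ i.castSucc l.castSucc *
            |B ⟨k.1, by have := k.2; omega⟩ l.castSucc j.castSucc -
              B ⟨k.1 + 1, by have := k.2; omega⟩ l.castSucc j.castSucc|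
        = ∑ k : Fin (T-1), ∑ i : Fin nX, ∑ j : Fin nY, ∑ l : Fin nZ,
            w2 k.1 / 2 * A ⟨k.1 + 1, by have := k.2; omega⟩ i.castSucc l.castSucc *
              (γ ^ p * |B ⟨k.1, by have := k.2; omega⟩ l.castSucc j.castSucc -
                B ⟨k.1 + 1, by have := k.2; omega⟩ l.castSucc j.castSucc|) := by
          simp only [Finset.mul_sum]
          exact Finset.sum_congr rfl fun k _ => Finset.sum_congr rfl fun i _ =>
            Finset.sum_congr rfl fun j _ => Finset.sum_congr rfl fun l _ => by ring
      _ = ∑ k : Fin (T-1), ∑ i : Fin nX, ∑ l : Fin nZ, ∑ j : Fin nY,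
            w2 k.1 / 2 * A ⟨k.1 + 1, by have := k.2; omega⟩ i.castSucc l.castSucc *
              (γ ^ p * |B ⟨k.1, by have := k.2; omega⟩ l.castSucc j.castSucc -
                B ⟨k.1 + 1, by have := k.2; omega⟩ l.castSucc j.castSucc|) := by
          exact Finset.sum_congr rfl fun k _ => Finset.sum_congr rfl fun i _ =>
            Finset.sum_comm
      _ ≤ ∑ k : Fin (T-1), ∑ i : Fin (nX+1), ∑ l : Fin nZ, ∑ j : Fin nY,
            w2 k.1 / 2 * A ⟨k.1 + 1, by have := k.2; omega⟩ i l.castSucc *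
              (γ ^ p * |B ⟨k.1, by have := k.2; omega⟩ l.castSucc j.castSucc -
                B ⟨k.1 + 1, by have := k.2; omega⟩ l.castSucc j.castSucc|) := by
          refine Finset.sum_le_sum fun k _ => ?_
          rw [Fin.sum_univ_castSucc]
          refine le_add_of_nonneg_right ?_
          refine Finset.sum_nonneg fun l _ => Finset.sum_nonneg fun j _ => ?_
          exact mul_nonneg (mul_nonneg (div_nonneg (hw2' k) (by norm_num)) ((hA _).1 _ _))
            (mul_nonneg hγp (abs_nonneg _))
      _ = ∑ k : Fin (T-1), ∑ i : Fin (nX+1), ∑ l : Fin nZ, ∑ j : Fin nY,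
            w2 k.1 / 2 * A ⟨k.1 + 1, by have := k.2; omega⟩ i l.castSucc *
              (γ * |B ⟨k.1, by have := k.2; omega⟩ l.castSucc j.castSucc -
                B ⟨k.1 + 1, by have := k.2; omega⟩ l.castSucc j.castSucc| ^ (1/p)) ^ p := by
          simp only [hpowabs]
  have ELsw : γ ^ p / 2 * ∑ k : Fin (T-1), w2 k.1 * ∑ i : Fin nX, ∑ j : Fin nY,
        |compW (A ⟨k.1, by have := k.2; omega⟩) (B ⟨k.1, by have := k.2; omega⟩)
            i.castSucc j.castSucc -
          compW (A ⟨k.1 + 1, by have := k.2; omega⟩) (B ⟨k.1 + 1, by have := k.2; omega⟩)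
            i.castSucc j.castSucc|
      ≤ (∑ k : Fin (T-1), ∑ i : Fin nX, ∑ l : Fin nZ, ∑ j : Fin (nY+1),
          w2 k.1 / 2 * B ⟨k.1, by have := k.2; omega⟩ l.castSucc j *
            (γ * |A ⟨k.1, by have := k.2; omega⟩ i.castSucc l.castSucc -
              A ⟨k.1 + 1, by have := k.2; omega⟩ i.castSucc l.castSucc| ^ (1/p)) ^ p)
        + ∑ k : Fin (T-1), ∑ i : Fin (nX+1), ∑ l : Fin nZ, ∑ j : Fin nY,
          w2 k.1 / 2 * A ⟨k.1 + 1, by have := k.2; omega⟩ i l.castSucc *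
            (γ * |B ⟨k.1, by have := k.2; omega⟩ l.castSucc j.castSucc -
              B ⟨k.1 + 1, by have := k.2; omega⟩ l.castSucc j.castSucc| ^ (1/p)) ^ p := by
    calc γ ^ p / 2 * ∑ k : Fin (T-1), w2 k.1 * ∑ i : Fin nX, ∑ j : Fin nY,
          |compW (A ⟨k.1, by have := k.2; omega⟩) (B ⟨k.1, by have := k.2; omega⟩)
              i.castSucc j.castSucc -
            compW (A ⟨k.1 + 1, by have := k.2; omega⟩) (B ⟨k.1 + 1, by have := k.2; omega⟩)
              i.castSucc j.castSucc|
        ≤ γ ^ p / 2 * ∑ k : Fin (T-1), w2 k.1 * ∑ i : Fin nX, ∑ j : Fin nY,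
            (∑ l : Fin nZ, |A ⟨k.1, by have := k.2; omega⟩ i.castSucc l.castSucc -
                A ⟨k.1 + 1, by have := k.2; omega⟩ i.castSucc l.castSucc| *
                B ⟨k.1, by have := k.2; omega⟩ l.castSucc j.castSucc
              + ∑ l : Fin nZ, A ⟨k.1 + 1, by have := k.2; omega⟩ i.castSucc l.castSucc *
                |B ⟨k.1, by have := k.2; omega⟩ l.castSucc j.castSucc -
                  B ⟨k.1 + 1, by have := k.2; omega⟩ l.castSucc j.castSucc|) := by
          refine mul_le_mul_of_nonneg_left (Finset.sum_le_sum fun k _ => ?_) hγp2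
          refine mul_le_mul_of_nonneg_left (Finset.sum_le_sum fun i _ =>
            Finset.sum_le_sum fun j _ => hΔ k i j) (hw2' k)
      _ = γ ^ p / 2 * ∑ k : Fin (T-1), w2 k.1 * (∑ i : Fin nX, ∑ j : Fin nY,
            ∑ l : Fin nZ, |A ⟨k.1, by have := k.2; omega⟩ i.castSucc l.castSucc -
                A ⟨k.1 + 1, by have := k.2; omega⟩ i.castSucc l.castSucc| *
                B ⟨k.1, by have := k.2; omega⟩ l.castSucc j.castSucc)
          + γ ^ p / 2 * ∑ k : Fin (T-1), w2 k.1 * (∑ i : Fin nX, ∑ j : Fin nY,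
            ∑ l : Fin nZ, A ⟨k.1 + 1, by have := k.2; omega⟩ i.castSucc l.castSucc *
                |B ⟨k.1, by have := k.2; omega⟩ l.castSucc j.castSucc -
                  B ⟨k.1 + 1, by have := k.2; omega⟩ l.castSucc j.castSucc|) := by
          simp only [Finset.sum_add_distrib, mul_add]
      _ ≤ _ := add_le_add hL2 hL3
  -- nonnegativity of the composed objective's argument
  have h0 : (0:ℝ) ≤ ∑ k : Fin T, w1 k.1 * ∑ i, ∑ j, Dmat c p X Y k i j * compW (A k) (B k) i j
      + γ ^ p / 2 * ∑ k : Fin (T-1), w2 k.1 * ∑ i : Fin nX, ∑ j : Fin nY,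
          |compW (A ⟨k.1, by have := k.2; omega⟩) (B ⟨k.1, by have := k.2; omega⟩)
              i.castSucc j.castSucc -
            compW (A ⟨k.1 + 1, by have := k.2; omega⟩) (B ⟨k.1 + 1, by have := k.2; omega⟩)
              i.castSucc j.castSucc| := by
    refine add_nonneg (Finset.sum_nonneg fun k _ => mul_nonneg (hw1' k)
      (Finset.sum_nonneg fun i _ => Finset.sum_nonneg fun j _ => mul_nonneg ?_
        (compW_nonneg (hA k) (hB k) i j)))
      (mul_nonneg hγp2 (Finset.sum_nonneg fun k _ => mul_nonneg (hw2' k)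
        (Finset.sum_nonneg fun i _ => Finset.sum_nonneg fun j _ => abs_nonneg _)))
    exact Real.rpow_nonneg (hdG0 _ _) _
  have EL := add_le_add ELloc ELsw
  refine le_trans (Real.rpow_le_rpow h0 EL hpinv) (le_trans H (le_of_eq ?_))
  rw [EFloc, EFsw, EGloc, EGsw]
  rfl
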